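/- Let S = {(0,0),(0,1),(0,3),(1,1),(1,3),(2,0),(2,1),(2,2),(2,3),(3,3)}. The mesh patterns q1 = (123, S) and q2 = (132, S) are jointly equidistributed. -/

import Mathlib

/-- The boundary-extended sequence of positions of a candidate occurrence:
`posExt i 0 = 0`, `posExt i a = i (a-1) + 1` (1-based position) for `1 ≤ a ≤ m`,
and `posExt i (m+1) = n + 1`. -/
def posExt {m n : ℕ} (i : Fin m → Fin n) : ℕ → ℕ := fun a =>
  if h : 1 ≤ a ∧ a ≤ m then ((i ⟨a - 1, by omega⟩ : Fin n) : ℕ) + 1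
  else if a = 0 then 0 else n + 1

/-- The boundary-extended increasing rearrangement of the values of a candidate
occurrence: `valExt τ π i 0 = 0`, `valExt τ π i b = π (i (τ⁻¹ (b-1))) + 1`
(the `b`-th smallest value, 1-based) for `1 ≤ b ≤ m`, and `valExt τ π i (m+1) = n + 1`. -/
def valExt {m n : ℕ} (τ : Equiv.Perm (Fin m)) (π : Equiv.Perm (Fin n))
    (i : Fin m → Fin n) : ℕ → ℕ := fun b =>
  if h : 1 ≤ b ∧ b ≤ m then ((π (i (τ.symm ⟨b - 1, by omega⟩)) : Fin n) : ℕ) + 1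
  else if b = 0 then 0 else n + 1

/-- `i : Fin m → Fin n` is an occurrence of the mesh pattern `(τ, R)` in the
permutation `π` of `{1, …, n}` (positions and values are taken 1-based via `+1`). -/
def IsMeshOcc {m n : ℕ} (τ : Equiv.Perm (Fin m)) (R : Set (ℕ × ℕ))
    (π : Equiv.Perm (Fin n)) (i : Fin m → Fin n) : Prop :=
  StrictMono i ∧
  (∀ a b : Fin m, π (i a) < π (i b) ↔ τ a < τ b) ∧
  ∀ a b : ℕ, (a, b) ∈ R →
    ¬ ∃ j : Fin n,
        posExt i a < (j : ℕ) + 1 ∧ (j : ℕ) + 1 < posExt i (a + 1) ∧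
        valExt τ π i b < ((π j : Fin n) : ℕ) + 1 ∧
        ((π j : Fin n) : ℕ) + 1 < valExt τ π i (b + 1)

/-- The number of occurrences of the mesh pattern `(τ, R)` in `π`. -/
noncomputable def occ {m n : ℕ} (τ : Equiv.Perm (Fin m)) (R : Set (ℕ × ℕ))
    (π : Equiv.Perm (Fin n)) : ℕ :=
  Nat.card {i : Fin m → Fin n // IsMeshOcc τ R π i}

/-- Mesh patterns `(τ₁, R₁)` and `(τ₂, R₂)` are jointly equidistributed. -/
def JointlyEquidistributed {m₁ m₂ : ℕ} (τ₁ : Equiv.Perm (Fin m₁)) (R₁ : Set (ℕ × ℕ))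
    (τ₂ : Equiv.Perm (Fin m₂)) (R₂ : Set (ℕ × ℕ)) : Prop :=
  ∀ n k ℓ : ℕ,
    Nat.card {π : Equiv.Perm (Fin n) // occ τ₁ R₁ π = k ∧ occ τ₂ R₂ π = ℓ} =
    Nat.card {π : Equiv.Perm (Fin n) // occ τ₁ R₁ π = ℓ ∧ occ τ₂ R₂ π = k}

/-- The pattern 123 (identity on three letters). -/
def perm123 : Equiv.Perm (Fin 3) := 1

/-- The pattern 132 (0-indexed: `0 ↦ 0`, `1 ↦ 2`, `2 ↦ 1`). -/
def perm132 : Equiv.Perm (Fin 3) := Equiv.swap 1 2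

/-- The pattern 12 (identity on two letters). -/
def perm12 : Equiv.Perm (Fin 2) := 1

/-- The pattern 21. -/
def perm21 : Equiv.Perm (Fin 2) := Equiv.swap 0 1

/-- The unsigned Stirling numbers of the first kind. -/
def stirlingFirst : ℕ → ℕ → ℕ
  | 0, 0 => 1
  | 0, _ + 1 => 0
  | _ + 1, 0 => 0
  | n + 1, k + 1 => n * stirlingFirst n (k + 1) + stirlingFirst n k

section Dev
open Equiv
variable {n : ℕ} (π : Equiv.Perm (Fin n)) (i : Fin 3 → Fin n)

def S0 : Set (ℕ × ℕ) := {(0, 0), (0, 1), (0, 3), (1, 1), (1, 3), (2, 0), (2, 1), (2, 2), (2, 3), (3, 3)}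

lemma pos0 : posExt i 0 = 0 := by simp [posExt]
lemma pos1 : posExt i 1 = (i 0 : ℕ) + 1 := by simp [posExt]
lemma pos2 : posExt i 2 = (i 1 : ℕ) + 1 := by simp [posExt]
lemma pos3 : posExt i 3 = (i 2 : ℕ) + 1 := by simp [posExt]
lemma pos4 : posExt i 4 = n + 1 := by simp [posExt]

lemma val1_0 : valExt perm123 π i 0 = 0 := by simp [valExt]
lemma val1_1 : valExt perm123 π i 1 = (π (i 0) : ℕ) + 1 := by simp [valExt, perm123]; rfl
lemma val1_2 : valExt perm123 π i 2 = (π (i 1) : ℕ) + 1 := by simp [valExt, perm123]; rfl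
lemma val1_3 : valExt perm123 π i 3 = (π (i 2) : ℕ) + 1 := by simp [valExt, perm123]; rfl
lemma val1_4 : valExt perm123 π i 4 = n + 1 := by simp [valExt]

lemma val2_0 : valExt perm132 π i 0 = 0 := by simp [valExt]
lemma val2_1 : valExt perm132 π i 1 = (π (i 0) : ℕ) + 1 := by
  simp [valExt, perm132]
  rw [Equiv.swap_apply_of_ne_of_ne] <;> decide
lemma val2_2 : valExt perm132 π i 2 = (π (i 2) : ℕ) + 1 := by simp [valExt, perm132]
lemma val2_3 : valExt perm132 π i 3 = (π (i 1) : ℕ) + 1 := by simp [valExt, perm132]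
lemma val2_4 : valExt perm132 π i 4 = n + 1 := by simp [valExt]
end Dev
section Dev2
open Equiv
variable {n : ℕ} (π : Equiv.Perm (Fin n)) (i : Fin 3 → Fin n)

lemma mono_no_between {V : ℕ → ℕ} (hV : Monotone V) (b t : ℕ) :
    ¬ (V b < V t ∧ V t < V (b + 1)) := by
  rintro ⟨h1, h2⟩
  rcases le_or_gt t b with h | h
  · exact absurd (hV h) (by omega)
  · exact absurd (hV (by omega : b + 1 ≤ t)) (by omega)

lemma val1_mono (h01 : π (i 0) < π (i 1)) (h12 : π (i 1) < π (i 2)) :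
    Monotone (valExt perm123 π i) := by
  apply monotone_nat_of_le_succ
  intro b
  match b with
  | 0 => rw [val1_0, val1_1]; omega
  | 1 => rw [val1_1, val1_2]; have := Fin.lt_iff_val_lt_val.mp h01; omega
  | 2 => rw [val1_2, val1_3]; have := Fin.lt_iff_val_lt_val.mp h12; omega
  | 3 => rw [val1_3, val1_4]; have := (π (i 2)).isLt; omega
  | (m+4) => simp [valExt]; rw [dif_neg (by omega)]; omega

lemma val2_mono (h02 : π (i 0) < π (i 2)) (h21 : π (i 2) < π (i 1)) :
    Monotone (valExt perm132 π i) := by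
  apply monotone_nat_of_le_succ
  intro b
  match b with
  | 0 => rw [val2_0, val2_1]; omega
  | 1 => rw [val2_1, val2_2]; have := Fin.lt_iff_val_lt_val.mp h02; omega
  | 2 => rw [val2_2, val2_3]; have := Fin.lt_iff_val_lt_val.mp h21; omega
  | 3 => rw [val2_3, val2_4]; have := (π (i 1)).isLt; omega
  | (m+4) => simp [valExt]; rw [dif_neg (by omega)]; omega

-- membership lemmas for S0
lemma memS00 : ((0,0) : ℕ × ℕ) ∈ S0 := by simp [S0]
lemma memS01 : ((0,1) : ℕ × ℕ) ∈ S0 := by simp [S0]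
lemma memS03 : ((0,3) : ℕ × ℕ) ∈ S0 := by simp [S0]
lemma memS11 : ((1,1) : ℕ × ℕ) ∈ S0 := by simp [S0]
lemma memS13 : ((1,3) : ℕ × ℕ) ∈ S0 := by simp [S0]
lemma memS20 : ((2,0) : ℕ × ℕ) ∈ S0 := by simp [S0]
lemma memS21 : ((2,1) : ℕ × ℕ) ∈ S0 := by simp [S0]
lemma memS22 : ((2,2) : ℕ × ℕ) ∈ S0 := by simp [S0]
lemma memS23 : ((2,3) : ℕ × ℕ) ∈ S0 := by simp [S0]
lemma memS33 : ((3,3) : ℕ × ℕ) ∈ S0 := by simp [S0]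

end Dev2
section Dev3
open Equiv
variable {n : ℕ}

lemma chain1 {π : Equiv.Perm (Fin n)} {i : Fin 3 → Fin n} (h : IsMeshOcc perm123 S0 π i) :
    π (i 0) < π (i 1) ∧ π (i 1) < π (i 2) :=
  ⟨(h.2.1 0 1).mpr (by decide), (h.2.1 1 2).mpr (by decide)⟩

lemma chain2 {π : Equiv.Perm (Fin n)} {i : Fin 3 → Fin n} (h : IsMeshOcc perm132 S0 π i) :
    π (i 0) < π (i 2) ∧ π (i 2) < π (i 1) :=
  ⟨(h.2.1 0 2).mpr (by decide), (h.2.1 2 1).mpr (by decide)⟩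

lemma swap1 {π : Equiv.Perm (Fin n)} {i : Fin 3 → Fin n} (h : IsMeshOcc perm123 S0 π i) :
    IsMeshOcc perm132 S0 (π * Equiv.swap (i 1) (i 2)) i := by
  obtain ⟨hm, hiso, hmesh⟩ := h
  obtain ⟨h01, h12⟩ := chain1 ⟨hm, hiso, hmesh⟩
  have hi01 : i 0 ≠ i 1 := ne_of_lt (hm (by decide))
  have hi02 : i 0 ≠ i 2 := ne_of_lt (hm (by decide))
  set s := Equiv.swap (i 1) (i 2) with hs
  have e0 : (π * s) (i 0) = π (i 0) := by
    rw [Equiv.Perm.mul_apply, Equiv.swap_apply_of_ne_of_ne hi01 hi02]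
  have e1 : (π * s) (i 1) = π (i 2) := by rw [Equiv.Perm.mul_apply, Equiv.swap_apply_left]
  have e2 : (π * s) (i 2) = π (i 1) := by rw [Equiv.Perm.mul_apply, Equiv.swap_apply_right]
  have eo : ∀ j : Fin n, j ≠ i 1 → j ≠ i 2 → (π * s) j = π j := fun j hj1 hj2 => by
    rw [Equiv.Perm.mul_apply, Equiv.swap_apply_of_ne_of_ne hj1 hj2]
  refine ⟨hm, ?_, ?_⟩
  · intro a b
    fin_cases a <;> fin_cases b
    · show (π * s) (i 0) < (π * s) (i 0) ↔ perm132 0 < perm132 0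
      exact iff_of_false (lt_irrefl _) (lt_irrefl _)
    · show (π * s) (i 0) < (π * s) (i 1) ↔ perm132 0 < perm132 1
      rw [e0, e1]; exact iff_of_true (h01.trans h12) (by decide)
    · show (π * s) (i 0) < (π * s) (i 2) ↔ perm132 0 < perm132 2
      rw [e0, e2]; exact iff_of_true h01 (by decide)
    · show (π * s) (i 1) < (π * s) (i 0) ↔ perm132 1 < perm132 0
      rw [e1, e0]; exact iff_of_false (lt_asymm (h01.trans h12)) (by decide)
    · show (π * s) (i 1) < (π * s) (i 1) ↔ perm132 1 < perm132 1
      exact iff_of_false (lt_irrefl _) (lt_irrefl _)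
    · show (π * s) (i 1) < (π * s) (i 2) ↔ perm132 1 < perm132 2
      rw [e1, e2]; exact iff_of_false (lt_asymm h12) (by decide)
    · show (π * s) (i 2) < (π * s) (i 0) ↔ perm132 2 < perm132 0
      rw [e2, e0]; exact iff_of_false (lt_asymm h01) (by decide)
    · show (π * s) (i 2) < (π * s) (i 1) ↔ perm132 2 < perm132 1
      rw [e2, e1]; exact iff_of_true h12 (by decide)
    · show (π * s) (i 2) < (π * s) (i 2) ↔ perm132 2 < perm132 2
      exact iff_of_false (lt_irrefl _) (lt_irrefl _)
  · -- mesh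
    have hval : ∀ b, valExt perm132 (π * s) i b = valExt perm123 π i b := by
      intro b
      match b with
      | 0 => rw [val2_0, val1_0]
      | 1 => rw [val2_1, val1_1, e0]
      | 2 => rw [val2_2, val1_2, e2]
      | 3 => rw [val2_3, val1_3, e1]
      | (m+4) => simp [valExt]
    intro a b hab
    rintro ⟨j, hj1, hj2, hj3, hj4⟩
    rw [hval] at hj3 hj4
    have hmono := val1_mono π i h01 h12
    by_cases hc1 : j = i 1
    · subst hc1
      rw [e1, ← val1_3] at hj3 hj4
      exact mono_no_between hmono b 3 ⟨hj3, hj4⟩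
    by_cases hc2 : j = i 2
    · subst hc2
      rw [e2, ← val1_2] at hj3 hj4
      exact mono_no_between hmono b 2 ⟨hj3, hj4⟩
    rw [eo j hc1 hc2] at hj3 hj4
    exact hmesh a b hab ⟨j, hj1, hj2, hj3, hj4⟩

lemma swap2 {π : Equiv.Perm (Fin n)} {i : Fin 3 → Fin n} (h : IsMeshOcc perm132 S0 π i) :
    IsMeshOcc perm123 S0 (π * Equiv.swap (i 1) (i 2)) i := by
  obtain ⟨hm, hiso, hmesh⟩ := h
  obtain ⟨h02, h21⟩ := chain2 ⟨hm, hiso, hmesh⟩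
  have hi01 : i 0 ≠ i 1 := ne_of_lt (hm (by decide))
  have hi02 : i 0 ≠ i 2 := ne_of_lt (hm (by decide))
  set s := Equiv.swap (i 1) (i 2) with hs
  have e0 : (π * s) (i 0) = π (i 0) := by
    rw [Equiv.Perm.mul_apply, Equiv.swap_apply_of_ne_of_ne hi01 hi02]
  have e1 : (π * s) (i 1) = π (i 2) := by rw [Equiv.Perm.mul_apply, Equiv.swap_apply_left]
  have e2 : (π * s) (i 2) = π (i 1) := by rw [Equiv.Perm.mul_apply, Equiv.swap_apply_right]
  have eo : ∀ j : Fin n, j ≠ i 1 → j ≠ i 2 → (π * s) j = π j := fun j hj1 hj2 => by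
    rw [Equiv.Perm.mul_apply, Equiv.swap_apply_of_ne_of_ne hj1 hj2]
  refine ⟨hm, ?_, ?_⟩
  · intro a b
    fin_cases a <;> fin_cases b
    · show (π * s) (i 0) < (π * s) (i 0) ↔ perm123 0 < perm123 0
      exact iff_of_false (lt_irrefl _) (lt_irrefl _)
    · show (π * s) (i 0) < (π * s) (i 1) ↔ perm123 0 < perm123 1
      rw [e0, e1]; exact iff_of_true h02 (by decide)
    · show (π * s) (i 0) < (π * s) (i 2) ↔ perm123 0 < perm123 2
      rw [e0, e2]; exact iff_of_true (h02.trans h21) (by decide)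
    · show (π * s) (i 1) < (π * s) (i 0) ↔ perm123 1 < perm123 0
      rw [e1, e0]; exact iff_of_false (lt_asymm h02) (by decide)
    · show (π * s) (i 1) < (π * s) (i 1) ↔ perm123 1 < perm123 1
      exact iff_of_false (lt_irrefl _) (lt_irrefl _)
    · show (π * s) (i 1) < (π * s) (i 2) ↔ perm123 1 < perm123 2
      rw [e1, e2]; exact iff_of_true h21 (by decide)
    · show (π * s) (i 2) < (π * s) (i 0) ↔ perm123 2 < perm123 0
      rw [e2, e0]; exact iff_of_false (lt_asymm (h02.trans h21)) (by decide)
    · show (π * s) (i 2) < (π * s) (i 1) ↔ perm123 2 < perm123 1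
      rw [e2, e1]; exact iff_of_false (lt_asymm h21) (by decide)
    · show (π * s) (i 2) < (π * s) (i 2) ↔ perm123 2 < perm123 2
      exact iff_of_false (lt_irrefl _) (lt_irrefl _)
  · have hval : ∀ b, valExt perm123 (π * s) i b = valExt perm132 π i b := by
      intro b
      match b with
      | 0 => rw [val1_0, val2_0]
      | 1 => rw [val1_1, val2_1, e0]
      | 2 => rw [val1_2, val2_2, e1]
      | 3 => rw [val1_3, val2_3, e2]
      | (m+4) => simp [valExt]
    intro a b hab
    rintro ⟨j, hj1, hj2, hj3, hj4⟩
    rw [hval] at hj3 hj4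
    have hmono := val2_mono π i h02 h21
    by_cases hc1 : j = i 1
    · subst hc1
      rw [e1, ← val2_2] at hj3 hj4
      exact mono_no_between hmono b 2 ⟨hj3, hj4⟩
    by_cases hc2 : j = i 2
    · subst hc2
      rw [e2, ← val2_3] at hj3 hj4
      exact mono_no_between hmono b 3 ⟨hj3, hj4⟩
    rw [eo j hc1 hc2] at hj3 hj4
    exact hmesh a b hab ⟨j, hj1, hj2, hj3, hj4⟩

end Dev3
section Cells
open Equiv
variable {n : ℕ}

lemma cell1_00 {π : Equiv.Perm (Fin n)} {i : Fin 3 → Fin n}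
    (h : IsMeshOcc perm123 S0 π i) :
    ∀ j : Fin n, (j : ℕ) < i 0 → (π j : ℕ) < (π (i 0) : ℕ) → False := by
  intro j h0 h1
  have hjn := j.isLt
  have hpn := (π j).isLt
  refine h.2.2 0 0 memS00 ⟨j, ?_, ?_, ?_, ?_⟩
  · rw [pos0] <;> omega
  · norm_num [pos1] <;> omega
  · rw [val1_0] <;> omega
  · norm_num [val1_1] <;> omega

lemma cell1_01 {π : Equiv.Perm (Fin n)} {i : Fin 3 → Fin n}
    (h : IsMeshOcc perm123 S0 π i) :
    ∀ j : Fin n, (j : ℕ) < i 0 → (π (i 0) : ℕ) < (π j : ℕ) → (π j : ℕ) < (π (i 1) : ℕ) → False := by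
  intro j h0 h1 h2
  have hjn := j.isLt
  have hpn := (π j).isLt
  refine h.2.2 0 1 memS01 ⟨j, ?_, ?_, ?_, ?_⟩
  · rw [pos0] <;> omega
  · norm_num [pos1] <;> omega
  · rw [val1_1] <;> omega
  · norm_num [val1_2] <;> omega

lemma cell1_03 {π : Equiv.Perm (Fin n)} {i : Fin 3 → Fin n}
    (h : IsMeshOcc perm123 S0 π i) :
    ∀ j : Fin n, (j : ℕ) < i 0 → (π (i 2) : ℕ) < (π j : ℕ) → False := by
  intro j h0 h1
  have hjn := j.isLt
  have hpn := (π j).isLt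
  refine h.2.2 0 3 memS03 ⟨j, ?_, ?_, ?_, ?_⟩
  · rw [pos0] <;> omega
  · norm_num [pos1] <;> omega
  · rw [val1_3] <;> omega
  · norm_num [val1_4] <;> omega

lemma cell1_11 {π : Equiv.Perm (Fin n)} {i : Fin 3 → Fin n}
    (h : IsMeshOcc perm123 S0 π i) :
    ∀ j : Fin n, (i 0 : ℕ) < j → (j : ℕ) < i 1 → (π (i 0) : ℕ) < (π j : ℕ) → (π j : ℕ) < (π (i 1) : ℕ) → False := by
  intro j h0 h1 h2 h3
  have hjn := j.isLt
  have hpn := (π j).isLt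
  refine h.2.2 1 1 memS11 ⟨j, ?_, ?_, ?_, ?_⟩
  · rw [pos1] <;> omega
  · norm_num [pos2] <;> omega
  · rw [val1_1] <;> omega
  · norm_num [val1_2] <;> omega

lemma cell1_13 {π : Equiv.Perm (Fin n)} {i : Fin 3 → Fin n}
    (h : IsMeshOcc perm123 S0 π i) :
    ∀ j : Fin n, (i 0 : ℕ) < j → (j : ℕ) < i 1 → (π (i 2) : ℕ) < (π j : ℕ) → False := by
  intro j h0 h1 h2
  have hjn := j.isLt
  have hpn := (π j).isLt
  refine h.2.2 1 3 memS13 ⟨j, ?_, ?_, ?_, ?_⟩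
  · rw [pos1] <;> omega
  · norm_num [pos2] <;> omega
  · rw [val1_3] <;> omega
  · norm_num [val1_4] <;> omega

lemma cell1_20 {π : Equiv.Perm (Fin n)} {i : Fin 3 → Fin n}
    (h : IsMeshOcc perm123 S0 π i) :
    ∀ j : Fin n, (i 1 : ℕ) < j → (j : ℕ) < i 2 → (π j : ℕ) < (π (i 0) : ℕ) → False := by
  intro j h0 h1 h2
  have hjn := j.isLt
  have hpn := (π j).isLt
  refine h.2.2 2 0 memS20 ⟨j, ?_, ?_, ?_, ?_⟩
  · rw [pos2] <;> omega
  · norm_num [pos3] <;> omega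
  · rw [val1_0] <;> omega
  · norm_num [val1_1] <;> omega

lemma cell1_21 {π : Equiv.Perm (Fin n)} {i : Fin 3 → Fin n}
    (h : IsMeshOcc perm123 S0 π i) :
    ∀ j : Fin n, (i 1 : ℕ) < j → (j : ℕ) < i 2 → (π (i 0) : ℕ) < (π j : ℕ) → (π j : ℕ) < (π (i 1) : ℕ) → False := by
  intro j h0 h1 h2 h3
  have hjn := j.isLt
  have hpn := (π j).isLt
  refine h.2.2 2 1 memS21 ⟨j, ?_, ?_, ?_, ?_⟩
  · rw [pos2] <;> omega
  · norm_num [pos3] <;> omega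
  · rw [val1_1] <;> omega
  · norm_num [val1_2] <;> omega

lemma cell1_22 {π : Equiv.Perm (Fin n)} {i : Fin 3 → Fin n}
    (h : IsMeshOcc perm123 S0 π i) :
    ∀ j : Fin n, (i 1 : ℕ) < j → (j : ℕ) < i 2 → (π (i 1) : ℕ) < (π j : ℕ) → (π j : ℕ) < (π (i 2) : ℕ) → False := by
  intro j h0 h1 h2 h3
  have hjn := j.isLt
  have hpn := (π j).isLt
  refine h.2.2 2 2 memS22 ⟨j, ?_, ?_, ?_, ?_⟩
  · rw [pos2] <;> omega
  · norm_num [pos3] <;> omega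
  · rw [val1_2] <;> omega
  · norm_num [val1_3] <;> omega

lemma cell1_23 {π : Equiv.Perm (Fin n)} {i : Fin 3 → Fin n}
    (h : IsMeshOcc perm123 S0 π i) :
    ∀ j : Fin n, (i 1 : ℕ) < j → (j : ℕ) < i 2 → (π (i 2) : ℕ) < (π j : ℕ) → False := by
  intro j h0 h1 h2
  have hjn := j.isLt
  have hpn := (π j).isLt
  refine h.2.2 2 3 memS23 ⟨j, ?_, ?_, ?_, ?_⟩
  · rw [pos2] <;> omega
  · norm_num [pos3] <;> omega
  · rw [val1_3] <;> omega
  · norm_num [val1_4] <;> omega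

lemma cell1_33 {π : Equiv.Perm (Fin n)} {i : Fin 3 → Fin n}
    (h : IsMeshOcc perm123 S0 π i) :
    ∀ j : Fin n, (i 2 : ℕ) < j → (π (i 2) : ℕ) < (π j : ℕ) → False := by
  intro j h0 h1
  have hjn := j.isLt
  have hpn := (π j).isLt
  refine h.2.2 3 3 memS33 ⟨j, ?_, ?_, ?_, ?_⟩
  · rw [pos3] <;> omega
  · norm_num [pos4] <;> omega
  · rw [val1_3] <;> omega
  · norm_num [val1_4] <;> omega

lemma cell2_00 {π : Equiv.Perm (Fin n)} {i : Fin 3 → Fin n}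
    (h : IsMeshOcc perm132 S0 π i) :
    ∀ j : Fin n, (j : ℕ) < i 0 → (π j : ℕ) < (π (i 0) : ℕ) → False := by
  intro j h0 h1
  have hjn := j.isLt
  have hpn := (π j).isLt
  refine h.2.2 0 0 memS00 ⟨j, ?_, ?_, ?_, ?_⟩
  · rw [pos0] <;> omega
  · norm_num [pos1] <;> omega
  · rw [val2_0] <;> omega
  · norm_num [val2_1] <;> omega

lemma cell2_01 {π : Equiv.Perm (Fin n)} {i : Fin 3 → Fin n}
    (h : IsMeshOcc perm132 S0 π i) :
    ∀ j : Fin n, (j : ℕ) < i 0 → (π (i 0) : ℕ) < (π j : ℕ) → (π j : ℕ) < (π (i 2) : ℕ) → False := by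
  intro j h0 h1 h2
  have hjn := j.isLt
  have hpn := (π j).isLt
  refine h.2.2 0 1 memS01 ⟨j, ?_, ?_, ?_, ?_⟩
  · rw [pos0] <;> omega
  · norm_num [pos1] <;> omega
  · rw [val2_1] <;> omega
  · norm_num [val2_2] <;> omega

lemma cell2_03 {π : Equiv.Perm (Fin n)} {i : Fin 3 → Fin n}
    (h : IsMeshOcc perm132 S0 π i) :
    ∀ j : Fin n, (j : ℕ) < i 0 → (π (i 1) : ℕ) < (π j : ℕ) → False := by
  intro j h0 h1
  have hjn := j.isLt
  have hpn := (π j).isLt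
  refine h.2.2 0 3 memS03 ⟨j, ?_, ?_, ?_, ?_⟩
  · rw [pos0] <;> omega
  · norm_num [pos1] <;> omega
  · rw [val2_3] <;> omega
  · norm_num [val2_4] <;> omega

lemma cell2_11 {π : Equiv.Perm (Fin n)} {i : Fin 3 → Fin n}
    (h : IsMeshOcc perm132 S0 π i) :
    ∀ j : Fin n, (i 0 : ℕ) < j → (j : ℕ) < i 1 → (π (i 0) : ℕ) < (π j : ℕ) → (π j : ℕ) < (π (i 2) : ℕ) → False := by
  intro j h0 h1 h2 h3
  have hjn := j.isLt
  have hpn := (π j).isLt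
  refine h.2.2 1 1 memS11 ⟨j, ?_, ?_, ?_, ?_⟩
  · rw [pos1] <;> omega
  · norm_num [pos2] <;> omega
  · rw [val2_1] <;> omega
  · norm_num [val2_2] <;> omega

lemma cell2_13 {π : Equiv.Perm (Fin n)} {i : Fin 3 → Fin n}
    (h : IsMeshOcc perm132 S0 π i) :
    ∀ j : Fin n, (i 0 : ℕ) < j → (j : ℕ) < i 1 → (π (i 1) : ℕ) < (π j : ℕ) → False := by
  intro j h0 h1 h2
  have hjn := j.isLt
  have hpn := (π j).isLt
  refine h.2.2 1 3 memS13 ⟨j, ?_, ?_, ?_, ?_⟩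
  · rw [pos1] <;> omega
  · norm_num [pos2] <;> omega
  · rw [val2_3] <;> omega
  · norm_num [val2_4] <;> omega

lemma cell2_20 {π : Equiv.Perm (Fin n)} {i : Fin 3 → Fin n}
    (h : IsMeshOcc perm132 S0 π i) :
    ∀ j : Fin n, (i 1 : ℕ) < j → (j : ℕ) < i 2 → (π j : ℕ) < (π (i 0) : ℕ) → False := by
  intro j h0 h1 h2
  have hjn := j.isLt
  have hpn := (π j).isLt
  refine h.2.2 2 0 memS20 ⟨j, ?_, ?_, ?_, ?_⟩
  · rw [pos2] <;> omega
  · norm_num [pos3] <;> omega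
  · rw [val2_0] <;> omega
  · norm_num [val2_1] <;> omega

lemma cell2_21 {π : Equiv.Perm (Fin n)} {i : Fin 3 → Fin n}
    (h : IsMeshOcc perm132 S0 π i) :
    ∀ j : Fin n, (i 1 : ℕ) < j → (j : ℕ) < i 2 → (π (i 0) : ℕ) < (π j : ℕ) → (π j : ℕ) < (π (i 2) : ℕ) → False := by
  intro j h0 h1 h2 h3
  have hjn := j.isLt
  have hpn := (π j).isLt
  refine h.2.2 2 1 memS21 ⟨j, ?_, ?_, ?_, ?_⟩
  · rw [pos2] <;> omega
  · norm_num [pos3] <;> omega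
  · rw [val2_1] <;> omega
  · norm_num [val2_2] <;> omega

lemma cell2_22 {π : Equiv.Perm (Fin n)} {i : Fin 3 → Fin n}
    (h : IsMeshOcc perm132 S0 π i) :
    ∀ j : Fin n, (i 1 : ℕ) < j → (j : ℕ) < i 2 → (π (i 2) : ℕ) < (π j : ℕ) → (π j : ℕ) < (π (i 1) : ℕ) → False := by
  intro j h0 h1 h2 h3
  have hjn := j.isLt
  have hpn := (π j).isLt
  refine h.2.2 2 2 memS22 ⟨j, ?_, ?_, ?_, ?_⟩
  · rw [pos2] <;> omega
  · norm_num [pos3] <;> omega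
  · rw [val2_2] <;> omega
  · norm_num [val2_3] <;> omega

lemma cell2_23 {π : Equiv.Perm (Fin n)} {i : Fin 3 → Fin n}
    (h : IsMeshOcc perm132 S0 π i) :
    ∀ j : Fin n, (i 1 : ℕ) < j → (j : ℕ) < i 2 → (π (i 1) : ℕ) < (π j : ℕ) → False := by
  intro j h0 h1 h2
  have hjn := j.isLt
  have hpn := (π j).isLt
  refine h.2.2 2 3 memS23 ⟨j, ?_, ?_, ?_, ?_⟩
  · rw [pos2] <;> omega
  · norm_num [pos3] <;> omega
  · rw [val2_3] <;> omega
  · norm_num [val2_4] <;> omega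

lemma cell2_33 {π : Equiv.Perm (Fin n)} {i : Fin 3 → Fin n}
    (h : IsMeshOcc perm132 S0 π i) :
    ∀ j : Fin n, (i 2 : ℕ) < j → (π (i 1) : ℕ) < (π j : ℕ) → False := by
  intro j h0 h1
  have hjn := j.isLt
  have hpn := (π j).isLt
  refine h.2.2 3 3 memS33 ⟨j, ?_, ?_, ?_, ?_⟩
  · rw [pos3] <;> omega
  · norm_num [pos4] <;> omega
  · rw [val2_3] <;> omega
  · norm_num [val2_4] <;> omega

end Cells
section Uniq
open Equiv
variable {n : ℕ}

lemma uniq1 {π : Equiv.Perm (Fin n)} {i i' : Fin 3 → Fin n}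
    (h : IsMeshOcc perm123 S0 π i) (h' : IsMeshOcc perm123 S0 π i') : i = i' := by
  obtain ⟨c01, c12⟩ := chain1 h
  obtain ⟨c01', c12'⟩ := chain1 h'
  rw [Fin.lt_iff_val_lt_val] at c01 c12 c01' c12'
  have mi01 : (i 0 : ℕ) < i 1 := h.1 (by decide)
  have mi12 : (i 1 : ℕ) < i 2 := h.1 (by decide)
  have mi01' : (i' 0 : ℕ) < i' 1 := h'.1 (by decide)
  have mi12' : (i' 1 : ℕ) < i' 2 := h'.1 (by decide)
  -- maximality
  have hmax : ∀ (k : Fin 3 → Fin n), IsMeshOcc perm123 S0 π k →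
      ∀ j : Fin n, (π j : ℕ) ≤ π (k 2) := by
    intro k hk j
    obtain ⟨d01, d12⟩ := chain1 hk
    rw [Fin.lt_iff_val_lt_val] at d01 d12
    by_contra hgt
    push_neg at hgt
    rcases Nat.lt_trichotomy (j : ℕ) (k 0 : ℕ) with hp | hp | hp
    · exact cell1_03 hk j hp hgt
    · have : j = k 0 := Fin.ext hp
      rw [this] at hgt; omega
    rcases Nat.lt_trichotomy (j : ℕ) (k 1 : ℕ) with hq | hq | hq
    · exact cell1_13 hk j hp hq hgt
    · have : j = k 1 := Fin.ext hq
      rw [this] at hgt; omega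
    rcases Nat.lt_trichotomy (j : ℕ) (k 2 : ℕ) with hr | hr | hr
    · exact cell1_23 hk j hq hr hgt
    · have : j = k 2 := Fin.ext hr
      rw [this] at hgt; omega
    · exact cell1_33 hk j hr hgt
  -- i 2 determined
  have e2 : i 2 = i' 2 :=
    π.injective (le_antisymm (Fin.le_def.mpr (hmax i' h' (i 2))) (Fin.le_def.mpr (hmax i h (i' 2))))
  -- adjacency
  have hadj : ∀ (k : Fin 3 → Fin n), IsMeshOcc perm123 S0 π k → (k 1 : ℕ) + 1 = k 2 := by
    intro k hk
    obtain ⟨d01, d12⟩ := chain1 hk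
    rw [Fin.lt_iff_val_lt_val] at d01 d12
    have m12 : (k 1 : ℕ) < k 2 := hk.1 (by decide)
    have m01 : (k 0 : ℕ) < k 1 := hk.1 (by decide)
    by_contra hne
    have hlt : (k 1 : ℕ) + 1 < k 2 := by omega
    set j : Fin n := ⟨(k 1 : ℕ) + 1, by have := (k 2).isLt; omega⟩ with hj
    have hj1 : (k 1 : ℕ) < j := by simp [hj]
    have hj2 : (j : ℕ) < k 2 := by simp [hj]; omega
    have hne0 : j ≠ k 0 := by intro hh; rw [hh] at hj1; omega
    have hne1 : j ≠ k 1 := by intro hh; rw [hh] at hj1; omega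
    have hne2 : j ≠ k 2 := by intro hh; rw [hh] at hj2; omega
    rcases Nat.lt_trichotomy (π j : ℕ) (π (k 0) : ℕ) with hv | hv | hv
    · exact cell1_20 hk j hj1 hj2 hv
    · exact hne0 (π.injective (Fin.ext hv))
    rcases Nat.lt_trichotomy (π j : ℕ) (π (k 1) : ℕ) with hw | hw | hw
    · exact cell1_21 hk j hj1 hj2 hv hw
    · exact hne1 (π.injective (Fin.ext hw))
    rcases Nat.lt_trichotomy (π j : ℕ) (π (k 2) : ℕ) with hx | hx | hx
    · exact cell1_22 hk j hj1 hj2 hw hx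
    · exact hne2 (π.injective (Fin.ext hx))
    · exact cell1_23 hk j hj1 hj2 hx
  have e1 : i 1 = i' 1 := by
    have a1 := hadj i h
    have a2 := hadj i' h'
    have : (i 2 : ℕ) = (i' 2 : ℕ) := by rw [e2]
    exact Fin.ext (by omega)
  have e0 : i 0 = i' 0 := by
    rcases Nat.lt_trichotomy (π (i 0) : ℕ) (π (i' 0) : ℕ) with hv | hv | hv
    · exfalso
      have hv1 : (π (i' 0) : ℕ) < π (i 1) := by rw [e1]; exact c01'
      rcases Nat.lt_trichotomy (i' 0 : ℕ) (i 0 : ℕ) with hp | hp | hp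
      · exact cell1_01 h (i' 0) hp hv hv1
      · have hq : i' 0 = i 0 := Fin.ext hp
        rw [hq] at hv; omega
      · have hp2 : (i' 0 : ℕ) < i 1 := by
          have : (i' 0 : ℕ) < i' 1 := mi01'
          rw [e1]; omega
        exact cell1_11 h (i' 0) hp hp2 hv hv1
    · exact π.injective (Fin.ext hv)
    · exfalso
      have hv1 : (π (i 0) : ℕ) < π (i' 1) := by rw [← e1]; exact c01
      rcases Nat.lt_trichotomy (i 0 : ℕ) (i' 0 : ℕ) with hp | hp | hp
      · exact cell1_01 h' (i 0) hp hv hv1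
      · have hq : i 0 = i' 0 := Fin.ext hp
        rw [hq] at hv; omega
      · have hp2 : (i 0 : ℕ) < i' 1 := by rw [← e1]; omega
        exact cell1_11 h' (i 0) hp hp2 hv hv1
  funext x
  fin_cases x
  · exact e0
  · exact e1
  · exact e2
end Uniq
section Uniq2
open Equiv
variable {n : ℕ}

lemma uniq2 {π : Equiv.Perm (Fin n)} {i i' : Fin 3 → Fin n}
    (h : IsMeshOcc perm132 S0 π i) (h' : IsMeshOcc perm132 S0 π i') : i = i' := by
  obtain ⟨c02, c21⟩ := chain2 h
  obtain ⟨c02', c21'⟩ := chain2 h'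
  rw [Fin.lt_iff_val_lt_val] at c02 c21 c02' c21'
  have mi01' : (i' 0 : ℕ) < i' 1 := h'.1 (by decide)
  have hmax : ∀ (k : Fin 3 → Fin n), IsMeshOcc perm132 S0 π k →
      ∀ j : Fin n, (π j : ℕ) ≤ π (k 1) := by
    intro k hk j
    obtain ⟨d02, d21⟩ := chain2 hk
    rw [Fin.lt_iff_val_lt_val] at d02 d21
    by_contra hgt
    push_neg at hgt
    rcases Nat.lt_trichotomy (j : ℕ) (k 0 : ℕ) with hp | hp | hp
    · exact cell2_03 hk j hp hgt
    · have : j = k 0 := Fin.ext hp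
      rw [this] at hgt; omega
    rcases Nat.lt_trichotomy (j : ℕ) (k 1 : ℕ) with hq | hq | hq
    · exact cell2_13 hk j hp hq hgt
    · have : j = k 1 := Fin.ext hq
      rw [this] at hgt; omega
    rcases Nat.lt_trichotomy (j : ℕ) (k 2 : ℕ) with hr | hr | hr
    · exact cell2_23 hk j hq hr hgt
    · have : j = k 2 := Fin.ext hr
      rw [this] at hgt; omega
    · exact cell2_33 hk j hr hgt
  have e1 : i 1 = i' 1 :=
    π.injective (le_antisymm (Fin.le_def.mpr (hmax i' h' (i 1))) (Fin.le_def.mpr (hmax i h (i' 1))))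
  have hadj : ∀ (k : Fin 3 → Fin n), IsMeshOcc perm132 S0 π k → (k 1 : ℕ) + 1 = k 2 := by
    intro k hk
    obtain ⟨d02, d21⟩ := chain2 hk
    rw [Fin.lt_iff_val_lt_val] at d02 d21
    have m12 : (k 1 : ℕ) < k 2 := hk.1 (by decide)
    have m01 : (k 0 : ℕ) < k 1 := hk.1 (by decide)
    by_contra hne
    have hlt : (k 1 : ℕ) + 1 < k 2 := by omega
    set j : Fin n := ⟨(k 1 : ℕ) + 1, by have := (k 2).isLt; omega⟩ with hj
    have hj1 : (k 1 : ℕ) < j := by simp [hj]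
    have hj2 : (j : ℕ) < k 2 := by simp [hj]; omega
    have hne0 : j ≠ k 0 := by intro hh; rw [hh] at hj1; omega
    have hne1 : j ≠ k 1 := by intro hh; rw [hh] at hj1; omega
    have hne2 : j ≠ k 2 := by intro hh; rw [hh] at hj2; omega
    rcases Nat.lt_trichotomy (π j : ℕ) (π (k 0) : ℕ) with hv | hv | hv
    · exact cell2_20 hk j hj1 hj2 hv
    · exact hne0 (π.injective (Fin.ext hv))
    rcases Nat.lt_trichotomy (π j : ℕ) (π (k 2) : ℕ) with hw | hw | hw
    · exact cell2_21 hk j hj1 hj2 hv hw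
    · exact hne2 (π.injective (Fin.ext hw))
    rcases Nat.lt_trichotomy (π j : ℕ) (π (k 1) : ℕ) with hx | hx | hx
    · exact cell2_22 hk j hj1 hj2 hw hx
    · exact hne1 (π.injective (Fin.ext hx))
    · exact cell2_23 hk j hj1 hj2 hx
  have e2 : i 2 = i' 2 := by
    have a1 := hadj i h
    have a2 := hadj i' h'
    have : (i 1 : ℕ) = (i' 1 : ℕ) := by rw [e1]
    exact Fin.ext (by omega)
  have e0 : i 0 = i' 0 := by
    rcases Nat.lt_trichotomy (π (i 0) : ℕ) (π (i' 0) : ℕ) with hv | hv | hv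
    · exfalso
      have hv1 : (π (i' 0) : ℕ) < π (i 2) := by rw [e2]; exact c02'
      rcases Nat.lt_trichotomy (i' 0 : ℕ) (i 0 : ℕ) with hp | hp | hp
      · exact cell2_01 h (i' 0) hp hv hv1
      · have hq : i' 0 = i 0 := Fin.ext hp
        rw [hq] at hv; omega
      · have hp2 : (i' 0 : ℕ) < i 1 := by rw [e1]; omega
        exact cell2_11 h (i' 0) hp hp2 hv hv1
    · exact π.injective (Fin.ext hv)
    · exfalso
      have hv1 : (π (i 0) : ℕ) < π (i' 2) := by rw [← e2]; exact c02
      rcases Nat.lt_trichotomy (i 0 : ℕ) (i' 0 : ℕ) with hp | hp | hp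
      · exact cell2_01 h' (i 0) hp hv hv1
      · have hq : i 0 = i' 0 := Fin.ext hp
        rw [hq] at hv; omega
      · have hp2 : (i 0 : ℕ) < i' 1 := by rw [← e1]; have : (i 0 : ℕ) < i 1 := h.1 (by decide); omega
        exact cell2_11 h' (i 0) hp hp2 hv hv1
  funext x
  fin_cases x
  · exact e0
  · exact e1
  · exact e2
end Uniq2
section OccLemmas
open Equiv
variable {n : ℕ}

lemma occ1_eq_one_iff (π : Equiv.Perm (Fin n)) :
    occ perm123 S0 π = 1 ↔ ∃ i, IsMeshOcc perm123 S0 π i := by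
  rw [occ, Nat.card_eq_one_iff_unique]
  constructor
  · rintro ⟨-, ⟨i, hi⟩⟩; exact ⟨i, hi⟩
  · rintro ⟨i, hi⟩
    exact ⟨⟨fun a b => Subtype.ext (uniq1 a.2 b.2)⟩, ⟨⟨i, hi⟩⟩⟩

lemma occ2_eq_one_iff (π : Equiv.Perm (Fin n)) :
    occ perm132 S0 π = 1 ↔ ∃ i, IsMeshOcc perm132 S0 π i := by
  rw [occ, Nat.card_eq_one_iff_unique]
  constructor
  · rintro ⟨-, ⟨i, hi⟩⟩; exact ⟨i, hi⟩
  · rintro ⟨i, hi⟩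
    exact ⟨⟨fun a b => Subtype.ext (uniq2 a.2 b.2)⟩, ⟨⟨i, hi⟩⟩⟩

lemma occ1_le_one (π : Equiv.Perm (Fin n)) : occ perm123 S0 π ≤ 1 := by
  rw [occ]
  exact Finite.card_le_one_iff_subsingleton.mpr ⟨fun a b => Subtype.ext (uniq1 a.2 b.2)⟩

lemma occ2_le_one (π : Equiv.Perm (Fin n)) : occ perm132 S0 π ≤ 1 := by
  rw [occ]
  exact Finite.card_le_one_iff_subsingleton.mpr ⟨fun a b => Subtype.ext (uniq2 a.2 b.2)⟩

noncomputable def occEquiv (n : ℕ) :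
    {π : Equiv.Perm (Fin n) // occ perm123 S0 π = 1} ≃
    {π : Equiv.Perm (Fin n) // occ perm132 S0 π = 1} where
  toFun := fun ⟨π, hπ⟩ =>
    let i := ((occ1_eq_one_iff π).mp hπ).choose
    ⟨π * Equiv.swap (i 1) (i 2), (occ2_eq_one_iff _).mpr
      ⟨i, swap1 ((occ1_eq_one_iff π).mp hπ).choose_spec⟩⟩
  invFun := fun ⟨π, hπ⟩ =>
    let i := ((occ2_eq_one_iff π).mp hπ).choose
    ⟨π * Equiv.swap (i 1) (i 2), (occ1_eq_one_iff _).mpr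
      ⟨i, swap2 ((occ2_eq_one_iff π).mp hπ).choose_spec⟩⟩
  left_inv := by
    rintro ⟨π, hπ⟩
    apply Subtype.ext
    simp only
    set i := ((occ1_eq_one_iff π).mp hπ).choose with hidef
    have hi : IsMeshOcc perm123 S0 π i := ((occ1_eq_one_iff π).mp hπ).choose_spec
    set π' := π * Equiv.swap (i 1) (i 2) with hπ'
    have hπ'1 : occ perm132 S0 π' = 1 := (occ2_eq_one_iff _).mpr ⟨i, swap1 hi⟩
    set i' := ((occ2_eq_one_iff π').mp hπ'1).choose with hi'def
    have hi' : IsMeshOcc perm132 S0 π' i' := ((occ2_eq_one_iff π').mp hπ'1).choose_spec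
    have : i' = i := uniq2 hi' (swap1 hi)
    show π' * Equiv.swap (i' 1) (i' 2) = π
    rw [this, hπ', mul_assoc, Equiv.swap_mul_self, mul_one]
  right_inv := by
    rintro ⟨π, hπ⟩
    apply Subtype.ext
    simp only
    set i := ((occ2_eq_one_iff π).mp hπ).choose with hidef
    have hi : IsMeshOcc perm132 S0 π i := ((occ2_eq_one_iff π).mp hπ).choose_spec
    set π' := π * Equiv.swap (i 1) (i 2) with hπ'
    have hπ'1 : occ perm123 S0 π' = 1 := (occ1_eq_one_iff _).mpr ⟨i, swap2 hi⟩
    set i' := ((occ1_eq_one_iff π').mp hπ'1).choose with hi'def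
    have hi' : IsMeshOcc perm123 S0 π' i' := ((occ1_eq_one_iff π').mp hπ'1).choose_spec
    have : i' = i := uniq1 hi' (swap2 hi)
    show π' * Equiv.swap (i' 1) (i' 2) = π
    rw [this, hπ', mul_assoc, Equiv.swap_mul_self, mul_one]

lemma card_occ1_eq_card_occ2 (n : ℕ) :
    Nat.card {π : Equiv.Perm (Fin n) // occ perm123 S0 π = 1} =
    Nat.card {π : Equiv.Perm (Fin n) // occ perm132 S0 π = 1} :=
  Nat.card_congr (occEquiv n)

end OccLemmas
section Counting
open Finset

lemma count_aux {α : Type*} [Fintype α] (f g : α → ℕ) (hf : ∀ x, f x ≤ 1) (hg : ∀ x, g x ≤ 1)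
    (h : Nat.card {x // f x = 1} = Nat.card {x // g x = 1}) :
    Nat.card {x // f x = 1 ∧ g x = 0} = Nat.card {x // f x = 0 ∧ g x = 1} := by
  classical
  have conv : ∀ (p : α → Prop) (hp : DecidablePred p),
      Nat.card {x // p x} = (Finset.univ.filter p).card := by
    intro p hp
    rw [Nat.card_eq_fintype_card, Fintype.card_subtype]
  rw [conv _ (fun _ => instDecidableAnd), conv _ (fun _ => instDecidableAnd)]
  rw [conv _ (fun _ => Nat.decEq _ _), conv _ (fun _ => Nat.decEq _ _)] at h
  have e1 : (univ.filter (fun x => f x = 1 ∧ g x = 1)).card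
      + (univ.filter (fun x => f x = 1 ∧ g x = 0)).card
      = (univ.filter (fun x => f x = 1)).card := by
    rw [← Finset.filter_filter (fun x => f x = 1) (fun x => g x = 1) univ,
        ← Finset.filter_filter (fun x => f x = 1) (fun x => g x = 0) univ]
    have : (univ.filter (fun x => f x = 1)).filter (fun x => g x = 0)
        = (univ.filter (fun x => f x = 1)).filter (fun x => ¬ (g x = 1)) := by
      apply Finset.filter_congr
      intro x _
      have := hg x
      constructor
      · intro hx; omega
      · intro hx; omega
    rw [this]
    exact Finset.card_filter_add_card_filter_not (fun x => g x = 1)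
  have e2 : (univ.filter (fun x => f x = 1 ∧ g x = 1)).card
      + (univ.filter (fun x => f x = 0 ∧ g x = 1)).card
      = (univ.filter (fun x => g x = 1)).card := by
    have c1 : univ.filter (fun x => f x = 1 ∧ g x = 1)
        = (univ.filter (fun x => g x = 1)).filter (fun x => f x = 1) := by
      rw [Finset.filter_filter]
      apply Finset.filter_congr
      intro x _
      exact and_comm
    have c2 : univ.filter (fun x => f x = 0 ∧ g x = 1)
        = (univ.filter (fun x => g x = 1)).filter (fun x => ¬ (f x = 1)) := by
      rw [Finset.filter_filter]
      apply Finset.filter_congr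
      intro x _
      have := hf x
      constructor
      · intro hx; omega
      · intro hx; omega
    rw [c1, c2]
    exact Finset.card_filter_add_card_filter_not (fun x => f x = 1)
  omega

lemma count_main {α : Type*} [Fintype α] (f g : α → ℕ) (hf : ∀ x, f x ≤ 1) (hg : ∀ x, g x ≤ 1)
    (h : Nat.card {x // f x = 1} = Nat.card {x // g x = 1}) (k ℓ : ℕ) :
    Nat.card {x // f x = k ∧ g x = ℓ} = Nat.card {x // f x = ℓ ∧ g x = k} := by
  by_cases hk2 : 2 ≤ k
  · haveI : IsEmpty {x // f x = k ∧ g x = ℓ} :=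
      ⟨fun ⟨x, hx⟩ => by have := hf x; omega⟩
    haveI : IsEmpty {x // f x = ℓ ∧ g x = k} :=
      ⟨fun ⟨x, hx⟩ => by have := hg x; omega⟩
    rw [Nat.card_of_isEmpty, Nat.card_of_isEmpty]
  by_cases hl2 : 2 ≤ ℓ
  · haveI : IsEmpty {x // f x = k ∧ g x = ℓ} :=
      ⟨fun ⟨x, hx⟩ => by have := hg x; omega⟩
    haveI : IsEmpty {x // f x = ℓ ∧ g x = k} :=
      ⟨fun ⟨x, hx⟩ => by have := hf x; omega⟩
    rw [Nat.card_of_isEmpty, Nat.card_of_isEmpty]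
  by_cases hkl : k = ℓ
  · subst hkl; rfl
  -- now {k, ℓ} = {0, 1}
  have : (k = 1 ∧ ℓ = 0) ∨ (k = 0 ∧ ℓ = 1) := by omega
  rcases this with ⟨hk, hl⟩ | ⟨hk, hl⟩
  · subst hk; subst hl
    exact count_aux f g hf hg h
  · subst hk; subst hl
    have := count_aux g f hg hf h.symm
    calc Nat.card {x // f x = 0 ∧ g x = 1}
        = Nat.card {x // g x = 1 ∧ f x = 0} :=
          Nat.card_congr (Equiv.subtypeEquivRight (fun x => and_comm))
      _ = Nat.card {x // g x = 0 ∧ f x = 1} := this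
      _ = Nat.card {x // f x = 1 ∧ g x = 0} :=
          Nat.card_congr (Equiv.subtypeEquivRight (fun x => and_comm))
end Counting
theorem statement_15 :
    JointlyEquidistributed perm123 ({(0, 0), (0, 1), (0, 3), (1, 1), (1, 3), (2, 0), (2, 1), (2, 2), (2, 3), (3, 3)} : Set (ℕ × ℕ))
      perm132 ({(0, 0), (0, 1), (0, 3), (1, 1), (1, 3), (2, 0), (2, 1), (2, 2), (2, 3), (3, 3)} : Set (ℕ × ℕ)) := by
  show JointlyEquidistributed perm123 S0 perm132 S0
  intro n k ℓ
  exact count_main (occ perm123 S0) (occ perm132 S0) occ1_le_one occ2_le_one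
    (card_occ1_eq_card_occ2 n) k ℓ
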